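/- Let V be a finite-dimensional real vector space, g a symmetric bilinear form on V, B an alternating bilinear form on V, and set E = ½(g + B). Let k_L, k_R : Fin n → V satisfy the null conditions g(k_{LA}, k_{LB}) = 0 and g(k_{RA}, k_{RB}) = 0 for all A, B, and assume the n×n real matrix h with entries h_{AB} = g(k_{RA}, k_{LB}) is invertible. Define θ_R^A(u) = Σ_B g(u, k_{LB}) (h⁻¹)_{BA}, θ_L^A(u) = Σ_B (h⁻¹)_{AB} g(k_{RB}, u), and Ẽ(u, v) = E(u, v) − Σ_{A,B} θ_R^A(u) h_{AB} θ_L^B(v). Then the symmetric part g̃(u, v) := Ẽ(u, v) + Ẽ(v, u) satisfies g̃(k_{LA}, v) = 0 and g̃(k_{RA}, v) = 0 for all A and all v ∈ V. -/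
import Mathlib


/-- The quotient metric of the null Kac-Moody quotient is
degenerate along all isometry directions.  With `E = ½(g + B)`, connections
`θ_L, θ_R` built from the invertible pairing `h_{AB} = g(k_{RA}, k_{LB})` of the
two null families, and `Ẽ = E - Σ θ_R^A h_{AB} θ_L^B`, the symmetric part
`g̃(u,v) = Ẽ(u,v) + Ẽ(v,u)` satisfies `g̃(k_{LA}, ·) = 0` and `g̃(k_{RA}, ·) = 0`. -/
theorem null_kacmoody_quotient_metric_degenerate
    (n : ℕ) (V : Type*) [AddCommGroup V] [Module ℝ V] [FiniteDimensional ℝ V]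
    (g B : V →ₗ[ℝ] V →ₗ[ℝ] ℝ)
    (hsymm : ∀ u v : V, g u v = g v u)
    (halt : ∀ u v : V, B u v = -B v u)
    (E : V → V → ℝ) (hE : ∀ u v, E u v = (1/2 : ℝ) * (g u v + B u v))
    (kL kR : Fin n → V)
    (hLnull : ∀ A B', g (kL A) (kL B') = 0)
    (hRnull : ∀ A B', g (kR A) (kR B') = 0)
    (h : Matrix (Fin n) (Fin n) ℝ) (hh : ∀ A B', h A B' = g (kR A) (kL B'))
    (hinv : IsUnit h.det)
    (θL θR : Fin n → V → ℝ)
    (hθR : ∀ A u, θR A u = ∑ B', g u (kL B') * h⁻¹ B' A)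
    (hθL : ∀ A u, θL A u = ∑ B', h⁻¹ A B' * g (kR B') u)
    (Et : V → V → ℝ)
    (hEt : ∀ u v, Et u v = E u v - ∑ A, ∑ B', θR A u * h A B' * θL B' v)
    (gt : V → V → ℝ) (hgt : ∀ u v, gt u v = Et u v + Et v u) :
    (∀ A, ∀ v, gt (kL A) v = 0) ∧
    (∀ A, ∀ v, gt (kR A) v = 0) := by
  have hinvh : ∀ i k : Fin n, (∑ j, h⁻¹ i j * h j k) = if i = k then (1:ℝ) else 0 := by
    intro i k
    have := Matrix.nonsing_inv_mul h hinv
    have := congrFun (congrFun this i) k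
    simpa [Matrix.mul_apply, Matrix.one_apply] using this
  have hhinv : ∀ i k : Fin n, (∑ j, h i j * h⁻¹ j k) = if i = k then (1:ℝ) else 0 := by
    intro i k
    have := Matrix.mul_nonsing_inv h hinv
    have := congrFun (congrFun this i) k
    simpa [Matrix.mul_apply, Matrix.one_apply] using this
  constructor
  · intro A v
    have hθRL : ∀ C, θR C (kL A) = 0 := by
      intro C; simp [hθR, hLnull]
    have hθLL : ∀ D, θL D (kL A) = if D = A then (1:ℝ) else 0 := by
      intro D
      rw [hθL]
      have : ∀ B' : Fin n, g (kR B') (kL A) = h B' A := fun B' => (hh B' A).symm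
      simp_rw [this]
      exact hinvh D A
    have e1 : Et (kL A) v = E (kL A) v := by
      rw [hEt]; simp [hθRL]
    have e2 : Et v (kL A) = E v (kL A) - g v (kL A) := by
      rw [hEt]
      congr 1
      simp_rw [hθLL, mul_ite, mul_one, mul_zero, Finset.sum_ite_eq' (Finset.univ : Finset (Fin n)),
        Finset.mem_univ, if_true]
      simp_rw [hθR, Finset.sum_mul]
      rw [Finset.sum_comm]
      simp_rw [mul_assoc, ← Finset.mul_sum, hinvh]
      simp
    have hs := hsymm (kL A) v
    have ha := halt (kL A) v
    rw [hgt, e1, e2, hE, hE]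
    linarith
  · intro A v
    have hθLR : ∀ D, θL D (kR A) = 0 := by
      intro D; simp [hθL, hRnull]
    have hθRR : ∀ C, θR C (kR A) = if A = C then (1:ℝ) else 0 := by
      intro C
      rw [hθR]
      have : ∀ B' : Fin n, g (kR A) (kL B') = h A B' := fun B' => (hh A B').symm
      simp_rw [this]
      exact hhinv A C
    have e1 : Et (kR A) v = E (kR A) v - g (kR A) v := by
      rw [hEt]
      congr 1
      simp_rw [hθRR, mul_assoc, ← Finset.mul_sum, ite_mul, one_mul, zero_mul]
      rw [Finset.sum_ite_eq (Finset.univ : Finset (Fin n)) A]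
      simp only [Finset.mem_univ, if_true]
      simp_rw [hθL, Finset.mul_sum]
      rw [Finset.sum_comm]
      simp_rw [← mul_assoc, ← Finset.sum_mul, hhinv]
      simp
    have e2 : Et v (kR A) = E v (kR A) := by
      rw [hEt]; simp [hθLR]
    have hs := hsymm (kR A) v
    have ha := halt (kR A) v
    rw [hgt, e1, e2, hE, hE]
    linarith
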